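/- Let V be a finite-dimensional real vector space and let Γ ⊆ Υ be finite subgroups of the general linear group GL(V). If every Γ-invariant polynomial function on V is also Υ-invariant (equivalently, if the invariant rings ℝ[V]^Γ and ℝ[V]^Υ coincide), then Γ = Υ. -/

import Mathlib

open MvPolynomial

/-- A vector space over an infinite field is not the union of finitely many
proper subspaces. -/
lemma avoid_subspaces {K V : Type*} [Field K] [Infinite K] [AddCommGroup V] [Module K V]
    (s : Finset (Submodule K V)) (hs : ∀ p ∈ s, p ≠ ⊤) :
    ∃ v : V, ∀ p ∈ s, v ∉ p := by
  classical
  induction s using Finset.induction_on with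
  | empty => exact ⟨0, by simp⟩
  | @insert p s hp ih =>
    obtain ⟨u, hu⟩ := ih fun q hq => hs q (Finset.mem_insert_of_mem hq)
    by_cases hup : u ∈ p
    · have hpT : p ≠ ⊤ := hs p (Finset.mem_insert_self p s)
      have hex : ∃ w, w ∉ p := by
        by_contra h
        push_neg at h
        exact hpT (Submodule.eq_top_iff'.2 h)
      obtain ⟨w, hw⟩ := hex
      have hbadfin : (⋃ q ∈ (s : Set (Submodule K V)), {t : K | u + t • w ∈ q}).Finite := by
        apply Set.Finite.biUnion s.finite_toSet
        intro q hq
        apply Set.Subsingleton.finite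
        intro t ht t' ht'
        by_contra hne
        have h1 : (t - t') • w ∈ q := by
          have := q.sub_mem ht ht'
          simpa [add_sub_add_left_eq_sub, ← sub_smul] using this
        have hwq : w ∈ q := by
          have h2 := q.smul_mem (t - t')⁻¹ h1
          rwa [smul_smul, inv_mul_cancel₀ (sub_ne_zero.2 hne), one_smul] at h2
        have huq : u ∈ q := by
          have := q.sub_mem ht (q.smul_mem t hwq)
          simpa using this
        exact hu q hq huq
      obtain ⟨t, ht⟩ := ((hbadfin.union (Set.finite_singleton 0)).infinite_compl).nonempty
      simp only [Set.mem_compl_iff, Set.mem_union, Set.mem_singleton_iff, not_or] at ht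
      refine ⟨u + t • w, fun q hq => ?_⟩
      rcases Finset.mem_insert.1 hq with rfl | hq'
      · intro hmem
        have h1 : t • w ∈ q := by simpa using q.sub_mem hmem hup
        have h2 : w ∈ q := by
          have h3 := q.smul_mem t⁻¹ h1
          rwa [smul_smul, inv_mul_cancel₀ ht.2, one_smul] at h3
        exact hw h2
      · exact fun hmem => ht.1 (Set.mem_biUnion hq' hmem)
    · refine ⟨u, fun q hq => ?_⟩
      rcases Finset.mem_insert.1 hq with rfl | hq'
      · exact hup
      · exact hu q hq'

lemma repr_comp {V : Type*} [AddCommGroup V] [Module ℝ V]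
    {ι : Type*} [Fintype ι] (b : Module.Basis ι ℝ V) (g : V ≃ₗ[ℝ] V) (w : V) (j : ι) :
    b.repr (g w) j = ∑ i, b.repr w i * b.repr (g (b i)) j := by
  conv_lhs => rw [← b.sum_repr w]
  rw [map_sum, map_sum, Finsupp.finset_sum_apply]
  refine Finset.sum_congr rfl fun i _ => ?_
  rw [map_smul, map_smul, Finsupp.smul_apply, smul_eq_mul]

theorem stmt6 {V : Type*} [AddCommGroup V] [Module ℝ V] [FiniteDimensional ℝ V]
    {ι : Type*} [Fintype ι] (b : Module.Basis ι ℝ V)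
    (Γ Υ : Subgroup (V ≃ₗ[ℝ] V)) [Finite Γ] [Finite Υ] (hΓΥ : Γ ≤ Υ)
    (hinv : ∀ P : MvPolynomial ι ℝ,
      (∀ g ∈ Γ, ∀ v : V,
        MvPolynomial.eval (fun i => b.repr (g v) i) P =
          MvPolynomial.eval (fun i => b.repr v i) P) →
      (∀ g ∈ Υ, ∀ v : V,
        MvPolynomial.eval (fun i => b.repr (g v) i) P =
          MvPolynomial.eval (fun i => b.repr v i) P)) :
    Γ = Υ := by
  classical
  have : Fintype Γ := Fintype.ofFinite _
  refine le_antisymm hΓΥ ?_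
  intro g hg
  by_contra hgΓ
  -- substitution of a linear map into a polynomial
  set comp : (V ≃ₗ[ℝ] V) → MvPolynomial ι ℝ → MvPolynomial ι ℝ :=
    fun h Q => bind₁ (fun j => ∑ i, MvPolynomial.C (b.repr (h (b i)) j) * X i) Q with hcomp
  have eval_comp : ∀ (h : V ≃ₗ[ℝ] V) (Q : MvPolynomial ι ℝ) (w : V),
      MvPolynomial.eval (fun i => b.repr w i) (comp h Q) =
        MvPolynomial.eval (fun i => b.repr (h w) i) Q := by
    intro h Q w
    have hj : ∀ j, MvPolynomial.eval (fun i => b.repr w i)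
        (∑ i, MvPolynomial.C (b.repr (h (b i)) j) * X i) = b.repr (h w) j := by
      intro j
      rw [repr_comp b h w j]
      simp [mul_comm]
    have hfun : (fun j => b.repr (h w) j) = fun j => MvPolynomial.eval
        (fun i => b.repr w i) (∑ i, MvPolynomial.C (b.repr (h (b i)) j) * X i) :=
      funext fun j => (hj j).symm
    rw [hfun, hcomp]
    exact eval₂Hom_bind₁ (RingHom.id ℝ) _ _ Q
  -- find a point v with (γ * g) v ≠ v for all γ ∈ Γ
  have key : ∃ v : V, ∀ γ : Γ, ((γ : V ≃ₗ[ℝ] V) * g) v ≠ v := by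
    have hprop : ∀ γ : Γ,
        LinearMap.ker (((γ : V ≃ₗ[ℝ] V) * g).toLinearMap - LinearMap.id) ≠ ⊤ := by
      intro γ htop
      have hne : ((γ : V ≃ₗ[ℝ] V) * g : V ≃ₗ[ℝ] V) ≠ 1 := by
        intro h1
        apply hgΓ
        have hγ : (γ : V ≃ₗ[ℝ] V) = g⁻¹ := mul_eq_one_iff_eq_inv.1 h1
        have hgv : g = ((γ : V ≃ₗ[ℝ] V))⁻¹ := by rw [hγ, inv_inv]
        rw [hgv]
        exact Γ.inv_mem γ.2
      apply hne
      ext w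
      have hw : w ∈ LinearMap.ker
          (((γ : V ≃ₗ[ℝ] V) * g).toLinearMap - LinearMap.id) := by
        rw [htop]; trivial
      simp only [LinearMap.mem_ker, LinearMap.sub_apply, LinearMap.id_apply,
        LinearEquiv.coe_coe] at hw
      simpa [sub_eq_zero] using hw
    obtain ⟨v, hv⟩ := avoid_subspaces
      ((Finset.univ : Finset Γ).image
        (fun γ : Γ => LinearMap.ker (((γ : V ≃ₗ[ℝ] V) * g).toLinearMap - LinearMap.id)))
      (by
        intro p hp
        obtain ⟨γ, -, rfl⟩ := Finset.mem_image.1 hp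
        exact hprop γ)
    refine ⟨v, fun γ hfix => hv _ (Finset.mem_image.2 ⟨γ, Finset.mem_univ γ, rfl⟩) ?_⟩
    simp only [LinearMap.mem_ker, LinearMap.sub_apply, LinearMap.id_apply,
      LinearEquiv.coe_coe, hfix, sub_self]
  obtain ⟨v, hv⟩ := key
  -- the separating polynomial Q
  set Q : MvPolynomial ι ℝ :=
    ∏ γ : Γ, ∑ j, (X j - MvPolynomial.C (b.repr ((γ : V ≃ₗ[ℝ] V) (g v)) j))^2 with hQ
  have evalQ : ∀ w : V, MvPolynomial.eval (fun i => b.repr w i) Q =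
      ∏ γ : Γ, ∑ j, (b.repr w j - b.repr ((γ : V ≃ₗ[ℝ] V) (g v)) j)^2 := by
    intro w
    rw [hQ, map_prod]
    refine Finset.prod_congr rfl fun γ _ => ?_
    rw [map_sum]
    exact Finset.sum_congr rfl fun j _ => by simp
  have hQnonneg : ∀ w : V, 0 ≤ MvPolynomial.eval (fun i => b.repr w i) Q := by
    intro w
    rw [evalQ w]
    exact Finset.prod_nonneg fun γ _ =>
      Finset.sum_nonneg fun j _ => sq_nonneg _
  have hQzero : ∀ γ : Γ,
      MvPolynomial.eval (fun i => b.repr ((γ : V ≃ₗ[ℝ] V) (g v)) i) Q = 0 := by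
    intro γ
    rw [evalQ]
    refine Finset.prod_eq_zero (Finset.mem_univ γ) ?_
    simp
  have hQpos : 0 < MvPolynomial.eval (fun i => b.repr v i) Q := by
    rw [evalQ]
    refine Finset.prod_pos fun γ _ => ?_
    have hne : v ≠ (γ : V ≃ₗ[ℝ] V) (g v) := by
      intro h
      exact hv γ h.symm
    rcases lt_or_eq_of_le (Finset.sum_nonneg fun j (_ : j ∈ Finset.univ) =>
        sq_nonneg (b.repr v j - b.repr ((γ : V ≃ₗ[ℝ] V) (g v)) j)) with h | h
    · exact h
    · exfalso
      apply hne
      apply b.repr.injective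
      ext j
      have := (Finset.sum_eq_zero_iff_of_nonneg
        (fun j _ => sq_nonneg (b.repr v j - b.repr ((γ : V ≃ₗ[ℝ] V) (g v)) j))).1 h.symm
        j (Finset.mem_univ j)
      have := pow_eq_zero_iff (n := 2) (by norm_num) |>.1 this
      linarith [sub_eq_zero.1 this]
  -- the Reynolds averaged polynomial P
  set P : MvPolynomial ι ℝ := ∑ γ : Γ, comp (γ : V ≃ₗ[ℝ] V) Q with hP
  have evalP : ∀ w : V, MvPolynomial.eval (fun i => b.repr w i) P =
      ∑ γ : Γ, MvPolynomial.eval (fun i => b.repr ((γ : V ≃ₗ[ℝ] V) w) i) Q := by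
    intro w
    rw [hP, map_sum]
    exact Finset.sum_congr rfl fun γ _ => eval_comp _ Q w
  have hPinv : ∀ δ ∈ Γ, ∀ w : V,
      MvPolynomial.eval (fun i => b.repr (δ w) i) P =
        MvPolynomial.eval (fun i => b.repr w i) P := by
    intro δ hδ w
    rw [evalP, evalP]
    exact Fintype.sum_bijective (· * (⟨δ, hδ⟩ : Γ))
      (Group.mulRight_bijective _) _ _ (fun γ => rfl)
  have := hinv P hPinv g hg v
  rw [evalP, evalP] at this
  have hzero : ∑ γ : Γ, MvPolynomial.eval
      (fun i => b.repr ((γ : V ≃ₗ[ℝ] V) (g v)) i) Q = 0 :=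
    Finset.sum_eq_zero fun γ _ => hQzero γ
  have hpos : 0 < ∑ γ : Γ, MvPolynomial.eval
      (fun i => b.repr ((γ : V ≃ₗ[ℝ] V) v) i) Q := by
    refine Finset.sum_pos' (fun γ _ => hQnonneg _) ⟨1, Finset.mem_univ _, ?_⟩
    simpa using hQpos
  rw [hzero] at this
  linarith
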